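/- Let M be a closed subspace of F²_d invariant under every right creation operator R_i. For a closed R-invariant subspace N, let W(N) := N ∩ (topological closure of the span of ∪_i R_i '' N)ᗮ be its wandering subspace. Fix 0 < r < 1, let Φ_r be the bounded operator on F²_d with Φ_r e_α = r^{|α|} • e_α for all words α, let M_r := the topological closure of Φ_r '' M (again a closed R-invariant subspace), and let P_r be the orthogonal projection of F²_d onto W(M_r). Then W(M_r) equals the topological closure of the image P_r '' (Φ_r '' W(M)). In particular, if W(M) is finite-dimensional, then W(M_r) is finite-dimensional with dim W(M_r) ≤ dim W(M) (the wandering dimension is non-decreasing as r increases to 1). -/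

import Mathlib

noncomputable section

open scoped ComplexConjugate
open Matrix
open scoped ComplexOrder

abbrev Word (d : ℕ) := FreeMonoid (Fin d)

instance {d : ℕ} : DecidableEq (Word d) :=
  fun a b => decidable_of_iff (FreeMonoid.toList a = FreeMonoid.toList b)
    FreeMonoid.toList.injective.eq_iff

abbrev Fock (d : ℕ) := lp (fun _ : Word d => ℂ) 2

abbrev fockBasis (d : ℕ) (α : Word d) : Fock d := lp.single 2 α (1 : ℂ)

/-- Product of the matrices `Z i` along the word `α`. -/
def wordProdM {d : ℕ} {n : Type} [Fintype n] [DecidableEq n]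
    (Z : Fin d → Matrix n n ℂ) (α : Word d) : Matrix n n ℂ :=
  (α.toList.map Z).prod

/-- Evaluation of a power series with coefficients `c` at the matrix tuple `Z`. -/
def evalM {d : ℕ} {n : Type} [Fintype n] [DecidableEq n]
    (c : Word d → ℂ) (Z : Fin d → Matrix n n ℂ) : Matrix n n ℂ :=
  ∑' α : Word d, c α • wordProdM Z α

def IsStrictRowContraction {d : ℕ} {n : Type} [Fintype n] [DecidableEq n]
    (Z : Fin d → Matrix n n ℂ) : Prop :=
  (1 - ∑ i, Z i * (Z i)ᴴ).PosDef

abbrev L2N := lp (fun _ : ℕ => ℂ) 2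

def wordProdO {d : ℕ} (Z : Fin d → (L2N →L[ℂ] L2N)) (α : Word d) : L2N →L[ℂ] L2N :=
  (α.toList.map Z).prod

def evalO {d : ℕ} (c : Word d → ℂ) (Z : Fin d → (L2N →L[ℂ] L2N)) : L2N →L[ℂ] L2N :=
  ∑' α : Word d, c α • wordProdO Z α

def IsStrictRowContractionO {d : ℕ} (Z : Fin d → (L2N →L[ℂ] L2N)) : Prop :=
  ∃ r : ℝ, r < 1 ∧
    ((r ^ 2 : ℂ) • (1 : L2N →L[ℂ] L2N)
      - ∑ i, Z i ∘L ContinuousLinearMap.adjoint (Z i)).IsPositive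

/-- The singularity space `𝒮(f)`. -/
def SingSpace {d : ℕ} (f : Word d → ℂ) : Set (Fock d) :=
  {h | (∀ (n : ℕ) (Z : Fin d → Matrix (Fin n) (Fin n) ℂ) (y : Fin n → ℂ),
          IsStrictRowContraction Z → (evalM f Z)ᴴ *ᵥ y = 0 → (evalM (h ·) Z)ᴴ *ᵥ y = 0) ∧
       (∀ (Z : Fin d → (L2N →L[ℂ] L2N)) (y : L2N),
          IsStrictRowContractionO Z → ContinuousLinearMap.adjoint (evalO f Z) y = 0 →
          ContinuousLinearMap.adjoint (evalO (h ·) Z) y = 0)}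

def wordOp {d : ℕ} (R : Fin d → (Fock d →L[ℂ] Fock d)) (α : Word d) :
    Fock d →L[ℂ] Fock d :=
  (α.toList.map R).prod

/-- `f` is cyclic for the right creation operators. -/
def IsNCOuter {d : ℕ} (R : Fin d → (Fock d →L[ℂ] Fock d)) (f : Fock d) : Prop :=
  (Submodule.span ℂ {g : Fock d | ∃ α : Word d, g = wordOp R α f}).topologicalClosure = ⊤

def IsNCInner {d : ℕ} (R : Fin d → (Fock d →L[ℂ] Fock d))
    (Θ : Fock d →L[ℂ] Fock d) : Prop :=
  (∀ x, ‖Θ x‖ = ‖x‖) ∧ ∀ i, Θ ∘L R i = R i ∘L Θ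

/-- The wandering subspace `W(N) = N ∩ (closure span ∪_i R_i N)ᗮ` of an `R`-invariant
subspace `N`. -/
def wanderingSubspace {d : ℕ} (R : Fin d → (Fock d →L[ℂ] Fock d))
    (N : Submodule ℂ (Fock d)) : Submodule ℂ (Fock d) :=
  N ⊓ ((Submodule.span ℂ (⋃ i, R i '' (N : Set (Fock d)))).topologicalClosure)ᗮ

set_option maxHeartbeats 1000000 in
/-- **Monotonicity of the wandering dimension under rescaling** (Lemma `monrank`).
If `M` is a closed `R`-invariant subspace, `M_r` the closure of `Φ_r M`, and `P_r` the
orthogonal projection onto `W(M_r)`, then `W(M_r)` is the closed span of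
`P_r Φ_r W(M)`; in particular `dim W(M_r) ≤ dim W(M)`. -/
theorem wandering_dimension_monotone {d : ℕ}
    (R : Fin d → (Fock d →L[ℂ] Fock d))
    (hR : ∀ (i : Fin d) (α : Word d), R i (fockBasis d α) = fockBasis d (α * FreeMonoid.of i))
    (M : Submodule ℂ (Fock d)) (hMc : IsClosed (M : Set (Fock d)))
    (hMinv : ∀ (i : Fin d), ∀ x ∈ M, R i x ∈ M)
    (r : ℝ) (hr0 : 0 < r) (hr1 : r < 1)
    (Φ : Fock d →L[ℂ] Fock d)
    (hΦ : ∀ α : Word d,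
      Φ (fockBasis d α) = ((r : ℂ) ^ (FreeMonoid.toList α).length) • fockBasis d α)
    (Mr : Submodule ℂ (Fock d)) (hMr : Mr = (Submodule.map (Φ : Fock d →ₗ[ℂ] Fock d) M).topologicalClosure)
    (P : Fock d →L[ℂ] Fock d)
    (hP1 : ∀ x : Fock d, P x ∈ wanderingSubspace R Mr)
    (hP2 : ∀ x ∈ wanderingSubspace R Mr, P x = x)
    (hP3 : IsSelfAdjoint P) :
    ((wanderingSubspace R Mr : Set (Fock d))
        = closure (P '' (Φ '' (wanderingSubspace R M : Set (Fock d))))) ∧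
      (FiniteDimensional ℂ (wanderingSubspace R M) →
        FiniteDimensional ℂ (wanderingSubspace R Mr) ∧
        Module.finrank ℂ (wanderingSubspace R Mr)
          ≤ Module.finrank ℂ (wanderingSubspace R M)) := by
  classical
  -- Two CLMs agreeing on the basis vectors are equal
  have ext_basis : ∀ (A B : Fock d →L[ℂ] Fock d),
      (∀ α, A (fockBasis d α) = B (fockBasis d α)) → A = B := by
    intro A B h
    refine ContinuousLinearMap.ext fun f => ?_
    have hf : HasSum (fun α : Word d => lp.single 2 α (f α)) f :=
      lp.hasSum_single (by norm_num) f
    have hA : HasSum (fun α : Word d => A (lp.single 2 α (f α))) (A f) := hf.mapL A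
    have hB : HasSum (fun α : Word d => B (lp.single 2 α (f α))) (B f) := hf.mapL B
    have key : ∀ α : Word d, A (lp.single 2 α (f α)) = B (lp.single 2 α (f α)) := by
      intro α
      have hs : (lp.single 2 α (f α) : Fock d) = f α • fockBasis d α := by
        rw [fockBasis, ← lp.single_smul]
        norm_num
      rw [hs, _root_.map_smul, _root_.map_smul, h]
    rw [show (fun α : Word d => A (lp.single 2 α (f α)))
        = (fun α : Word d => B (lp.single 2 α (f α))) from funext key] at hA
    exact hA.unique hB
  -- commutation relation Φ R_i = r • R_i Φ
  have hcomm : ∀ i : Fin d, Φ ∘L R i = (r : ℂ) • (R i ∘L Φ) := by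
    intro i
    apply ext_basis
    intro α
    simp only [ContinuousLinearMap.comp_apply, ContinuousLinearMap.smul_apply]
    rw [hR, hΦ, hΦ, _root_.map_smul, hR]
    have hlen : (FreeMonoid.toList (α * FreeMonoid.of i)).length
        = (FreeMonoid.toList α).length + 1 := by
      simp [FreeMonoid.toList_of]
    rw [hlen, pow_succ, smul_smul, mul_comm]
  set N : Submodule ℂ (Fock d) :=
    (Submodule.span ℂ (⋃ i, R i '' (M : Set (Fock d)))).topologicalClosure with hN
  set Nr : Submodule ℂ (Fock d) :=
    (Submodule.span ℂ (⋃ i, R i '' (Mr : Set (Fock d)))).topologicalClosure with hNr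
  have hWM : wanderingSubspace R M = M ⊓ Nᗮ := rfl
  have hWMr : wanderingSubspace R Mr = Mr ⊓ Nrᗮ := rfl
  have hNM : N ≤ M := by
    refine Submodule.topologicalClosure_minimal _ ?_ hMc
    rw [Submodule.span_le]
    rintro x hx
    simp only [Set.mem_iUnion, Set.mem_image] at hx
    obtain ⟨i, y, hy, rfl⟩ := hx
    exact hMinv i y hy
  have hMrClosed : IsClosed (Mr : Set (Fock d)) := by
    rw [hMr]; exact Submodule.isClosed_topologicalClosure _
  have hNrClosed : IsClosed (Nr : Set (Fock d)) :=
    Submodule.isClosed_topologicalClosure _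
  have hWMrClosed : IsClosed ((wanderingSubspace R Mr : Set (Fock d))) := by
    rw [hWMr]
    exact hMrClosed.inter (Submodule.isClosed_orthogonal _)
  -- Φ maps M into Mr
  have hΦM : ∀ x ∈ M, Φ x ∈ Mr := by
    intro x hx
    rw [hMr]
    exact Submodule.le_topologicalClosure _ (Submodule.mem_map_of_mem hx)
  -- Φ maps N into Nr
  have hΦN : ∀ x ∈ N, Φ x ∈ Nr := by
    have hgen : ∀ x ∈ Submodule.span ℂ (⋃ i, R i '' (M : Set (Fock d))), Φ x ∈ Nr := by
      intro x hx
      induction hx using Submodule.span_induction with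
      | mem y hy =>
        simp only [Set.mem_iUnion, Set.mem_image] at hy
        obtain ⟨i, z, hz, rfl⟩ := hy
        have h1 : Φ (R i z) = (r : ℂ) • (R i (Φ z)) := by
          calc Φ (R i z) = (Φ ∘L R i) z := rfl
            _ = ((r : ℂ) • (R i ∘L Φ)) z := by rw [hcomm i]
            _ = (r : ℂ) • (R i (Φ z)) := rfl
        have h2 : R i (Φ z) ∈ Nr := by
          apply Submodule.le_topologicalClosure
          apply Submodule.subset_span
          exact Set.mem_iUnion.2 ⟨i, Set.mem_image_of_mem _ (hΦM z hz)⟩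
        rw [h1]
        exact Nr.smul_mem _ h2
      | zero => simpa using Nr.zero_mem
      | add a b _ _ ha hb => rw [map_add]; exact Nr.add_mem ha hb
      | smul c a _ ha => rw [_root_.map_smul]; exact Nr.smul_mem _ ha
    intro x hx
    have hx' : x ∈ closure ((Submodule.span ℂ (⋃ i, R i '' (M : Set (Fock d)))) :
        Set (Fock d)) := hx
    have h3 : Φ x ∈ closure (Φ '' ((Submodule.span ℂ (⋃ i, R i '' (M : Set (Fock d)))) :
        Set (Fock d))) := image_closure_subset_closure_image Φ.continuous ⟨x, hx', rfl⟩
    have h4 : Φ '' ((Submodule.span ℂ (⋃ i, R i '' (M : Set (Fock d)))) : Set (Fock d))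
        ⊆ (Nr : Set (Fock d)) := by
      rintro - ⟨z, hz, rfl⟩
      exact hgen z hz
    have := (closure_mono h4) h3
    rwa [hNrClosed.closure_eq] at this
  -- P annihilates Nr
  have hadj : ContinuousLinearMap.adjoint P = P :=
    ContinuousLinearMap.isSelfAdjoint_iff'.mp hP3
  have hPkill : ∀ y ∈ Nr, P y = 0 := by
    intro y hy
    have hPy : P y ∈ Nrᗮ := ((hWMr ▸ hP1 y : P y ∈ Mr ⊓ Nrᗮ)).2
    have h1 : (inner ℂ (P y) (P y) : ℂ) = inner ℂ y (P (P y)) := by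
      nth_rewrite 1 [← hadj]
      exact ContinuousLinearMap.adjoint_inner_left P _ _
    rw [hP2 _ (hP1 y)] at h1
    have h2 : (inner ℂ y (P y) : ℂ) = 0 := hPy y hy
    rw [h2] at h1
    exact inner_self_eq_zero.mp h1
  -- orthogonal decomposition of M
  haveI : CompleteSpace N := (Submodule.isClosed_topologicalClosure _).completeSpace_coe
  have hdec : ∀ x ∈ M, ∃ w ∈ wanderingSubspace R M, ∃ n ∈ N, x = w + n := by
    intro x hx
    refine ⟨x - N.orthogonalProjection x, ?_, N.orthogonalProjection x,
      (N.orthogonalProjection x).2, by abel⟩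
    rw [hWM]
    exact ⟨M.sub_mem hx (hNM (N.orthogonalProjection x).2),
      Submodule.sub_starProjection_mem_orthogonal (K := N) x⟩
  -- key image inclusion
  have himg : P '' (Φ '' (M : Set (Fock d)))
      ⊆ P '' (Φ '' ((wanderingSubspace R M : Set (Fock d)))) := by
    rintro - ⟨-, ⟨x, hx, rfl⟩, rfl⟩
    obtain ⟨w, hw, n, hn, rfl⟩ := hdec x hx
    refine ⟨Φ w, Set.mem_image_of_mem _ hw, ?_⟩
    rw [map_add, map_add, hPkill _ (hΦN n hn), add_zero]
  have hset : (wanderingSubspace R Mr : Set (Fock d))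
      = closure (P '' (Φ '' (wanderingSubspace R M : Set (Fock d)))) := by
    apply Set.Subset.antisymm
    · intro x hx
      have hxMr : x ∈ Mr := ((hWMr ▸ hx : x ∈ Mr ⊓ Nrᗮ)).1
      have hxcl : x ∈ closure (Φ '' (M : Set (Fock d))) := by
        have h0 : x ∈ (Submodule.map (Φ : Fock d →ₗ[ℂ] Fock d) M).topologicalClosure := hMr ▸ hxMr
        rw [← SetLike.mem_coe, Submodule.topologicalClosure_coe, Submodule.map_coe] at h0
        exact h0
      have h1 : P x ∈ closure (P '' (Φ '' (M : Set (Fock d)))) :=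
        image_closure_subset_closure_image P.continuous ⟨x, hxcl, rfl⟩
      rw [hP2 x hx] at h1
      exact closure_mono himg h1
    · apply closure_minimal _ hWMrClosed
      rintro - ⟨z, -, rfl⟩
      exact hP1 z
  refine ⟨hset, ?_⟩
  intro hfin
  haveI := hfin
  set S : Submodule ℂ (Fock d) :=
    Submodule.map ((P : Fock d →ₗ[ℂ] Fock d).comp (Φ : Fock d →ₗ[ℂ] Fock d))
      (wanderingSubspace R M) with hS
  haveI : FiniteDimensional ℂ S := Module.Finite.map _ _
  have hScoe : (S : Set (Fock d))
      = P '' (Φ '' (wanderingSubspace R M : Set (Fock d))) := by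
    rw [hS, Submodule.map_coe, ← Set.image_comp]
    rfl
  have hSclosed : IsClosed (S : Set (Fock d)) := S.closed_of_finiteDimensional
  have hWS : wanderingSubspace R Mr = S := by
    apply SetLike.coe_injective
    rw [hset, ← hScoe, hSclosed.closure_eq]
  rw [hWS]
  exact ⟨inferInstance, Submodule.finrank_map_le _ _⟩
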